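/- Let {α_n}_{n≥0} and {β_n}_{n≥0} be sequences of positive reals such that Σ_n α_n = ∞ and α_n → 0 as n → ∞, and suppose there exist constants ς > 0, c > 0, and N such that ς·α_n ≤ β_n ≤ c·α_n for all n ≥ N. Then ℓ({β_n}) ≤ ℓ({α_n})/c, i.e., limsup_{n→∞} ln(β_n)/(Σ_{k=0}^{n} β_k) ≤ (1/c)·limsup_{n→∞} ln(α_n)/(Σ_{k=0}^{n} α_k). -/
import Mathlib

open Filter

/-- If `Σ_n α_n = ∞`, `α_n → 0`, and eventually `ς α_n ≤ β_n ≤ c α_n`, then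
`ℓ({β_n}) ≤ ℓ({α_n})/c`, where
`ℓ({α_n}) = limsup_n ln(α_n)/(Σ_{k=0}^n α_k)` (computed in the extended
reals, since it may be `−∞`). -/
theorem statement17 (α β : ℕ → ℝ)
    (hα : ∀ n, 0 < α n) (hβ : ∀ n, 0 < β n)
    (hdiv : Filter.Tendsto (fun n : ℕ => ∑ k ∈ Finset.range n, α k)
      Filter.atTop Filter.atTop)
    (hα0 : Filter.Tendsto α Filter.atTop (nhds 0))
    (ς c : ℝ) (hς : 0 < ς) (hc : 0 < c) (N : ℕ)
    (hscale : ∀ n : ℕ, N ≤ n → ς * α n ≤ β n ∧ β n ≤ c * α n) :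
    Filter.limsup
        (fun n : ℕ =>
          ((Real.log (β n) / ∑ k ∈ Finset.range (n + 1), β k : ℝ) : EReal))
        Filter.atTop
      ≤ ((1 / c : ℝ) : EReal) *
        Filter.limsup
          (fun n : ℕ =>
            ((Real.log (α n) / ∑ k ∈ Finset.range (n + 1), α k : ℝ) : EReal))
          Filter.atTop := by
  set L : EReal := Filter.limsup
      (fun n : ℕ =>
        ((Real.log (α n) / ∑ k ∈ Finset.range (n + 1), α k : ℝ) : EReal))
      Filter.atTop with hLdef
  have hSpos : ∀ n : ℕ, 0 < ∑ k ∈ Finset.range (n + 1), α k := fun n =>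
    Finset.sum_pos (fun k _ => hα k) ⟨0, Finset.mem_range.2 n.succ_pos⟩
  have hTpos : ∀ n : ℕ, 0 < ∑ k ∈ Finset.range (n + 1), β k := fun n =>
    Finset.sum_pos (fun k _ => hβ k) ⟨0, Finset.mem_range.2 n.succ_pos⟩
  -- eventually β n ≤ 1, hence log (β n) ≤ 0
  have hβ1 : ∀ᶠ n in atTop, Real.log (β n) ≤ 0 := by
    have h1 : ∀ᶠ n in atTop, α n < 1 / c :=
      hα0.eventually_lt_const (by positivity)
    filter_upwards [h1, eventually_ge_atTop N] with n h1 hn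
    have h2 : β n ≤ c * α n := (hscale n hn).2
    have h3 : β n ≤ 1 := by
      have := mul_lt_mul_of_pos_left h1 hc
      rw [mul_one_div, div_self hc.ne'] at this
      linarith
    exact Real.log_nonpos (hβ n).le h3
  -- log(α n) eventually nonpositive, so L ≤ 0
  have hL0 : L ≤ (0 : EReal) := by
    refine Filter.limsup_le_of_le (by isBoundedDefault) ?_
    have h1 : ∀ᶠ n in atTop, α n < 1 := hα0.eventually_lt_const one_pos
    filter_upwards [h1] with n h1
    have : Real.log (α n) / ∑ k ∈ Finset.range (n + 1), α k ≤ 0 :=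
      div_nonpos_iff.2 (Or.inr ⟨Real.log_nonpos (hα n).le h1.le, (hSpos n).le⟩)
    exact_mod_cast EReal.coe_nonpos.2 this
  -- the constant C and the upper bound on partial sums of β
  set C : ℝ := ∑ k ∈ Finset.range N, β k with hCdef
  have hC0 : 0 ≤ C := Finset.sum_nonneg fun k _ => (hβ k).le
  have hTle : ∀ n : ℕ, N ≤ n →
      (∑ k ∈ Finset.range (n + 1), β k) ≤ C + c * ∑ k ∈ Finset.range (n + 1), α k := by
    intro n hn
    have hN : N ≤ n + 1 := hn.trans n.le_succ
    have e1 : (∑ k ∈ Finset.range N, β k) + ∑ k ∈ Finset.Ico N (n + 1), β k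
        = ∑ k ∈ Finset.range (n + 1), β k := Finset.sum_range_add_sum_Ico β hN
    have e2 : ∑ k ∈ Finset.Ico N (n + 1), β k ≤ c * ∑ k ∈ Finset.Ico N (n + 1), α k := by
      rw [Finset.mul_sum]
      exact Finset.sum_le_sum fun k hk =>
        (hscale k (Finset.mem_Ico.1 hk).1).2
    have e3 : ∑ k ∈ Finset.Ico N (n + 1), α k ≤ ∑ k ∈ Finset.range (n + 1), α k := by
      have : (∑ k ∈ Finset.range N, α k) + ∑ k ∈ Finset.Ico N (n + 1), α k
          = ∑ k ∈ Finset.range (n + 1), α k := Finset.sum_range_add_sum_Ico α hN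
      have hpos : 0 ≤ ∑ k ∈ Finset.range N, α k := Finset.sum_nonneg fun k _ => (hα k).le
      linarith
    have : c * ∑ k ∈ Finset.Ico N (n + 1), α k ≤ c * ∑ k ∈ Finset.range (n + 1), α k :=
      mul_le_mul_of_nonneg_left e3 hc.le
    linarith
  -- main argument
  apply le_of_forall_gt_imp_ge_of_dense
  intro b hb
  obtain ⟨r, hr1, hr2⟩ := EReal.exists_between_coe_real hb
  refine le_trans ?_ hr2.le
  refine Filter.limsup_le_of_le (by isBoundedDefault) ?_
  rcases le_or_gt 0 r with hr0 | hr0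
  · -- r ≥ 0 : the terms are eventually nonpositive
    filter_upwards [hβ1] with n h1
    have : Real.log (β n) / ∑ k ∈ Finset.range (n + 1), β k ≤ r :=
      le_trans (div_nonpos_iff.2 (Or.inr ⟨h1, (hTpos n).le⟩)) hr0
    exact_mod_cast EReal.coe_le_coe_iff.2 this
  · -- r < 0 : then L < c * r
    have hLcr : L < ((c * r : ℝ) : EReal) := by
      rcases eq_or_ne L ⊥ with hbot | hbot
      · rw [hbot]; exact EReal.bot_lt_coe _
      · have htop : L ≠ ⊤ := (hL0.trans_lt (by simp)).ne
        lift L to ℝ using ⟨htop, hbot⟩ with x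
        rw [← EReal.coe_mul] at hr1
        have hx : (1 / c) * x < r := EReal.coe_lt_coe_iff.1 hr1
        have : x < c * r := by
          rw [one_div, inv_mul_eq_div] at hx
          have := (div_lt_iff₀ hc).1 hx
          linarith
        exact_mod_cast EReal.coe_lt_coe_iff.2 this
    obtain ⟨M, hM1, hM2⟩ := EReal.exists_between_coe_real hLcr
    have hM2' : M < c * r := EReal.coe_lt_coe_iff.1 hM2
    have hg : ∀ᶠ n in atTop,
        ((Real.log (α n) / ∑ k ∈ Finset.range (n + 1), α k : ℝ) : EReal) < (M : EReal) :=
      Filter.eventually_lt_of_limsup_lt hM1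
    -- partial sums of α eventually large
    have hS' : Filter.Tendsto (fun n : ℕ => ∑ k ∈ Finset.range (n + 1), α k)
        Filter.atTop Filter.atTop := by
      have := hdiv.comp (Filter.tendsto_add_atTop_nat 1)
      exact this
    have hSbig : ∀ᶠ n in atTop,
        (r * C - Real.log c) / (M - r * c) ≤ ∑ k ∈ Finset.range (n + 1), α k :=
      hS'.eventually_ge_atTop _
    filter_upwards [hβ1, hg, hSbig, eventually_ge_atTop N] with n hlogβ hgn hSn hn
    set S : ℝ := ∑ k ∈ Finset.range (n + 1), α k with hSdef
    set T : ℝ := ∑ k ∈ Finset.range (n + 1), β k with hTdef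
    have hSp : 0 < S := hSpos n
    have hTp : 0 < T := hTpos n
    have hgn' : Real.log (α n) / S < M := EReal.coe_lt_coe_iff.1 hgn
    have hlogα : Real.log (α n) < M * S := (div_lt_iff₀ hSp).1 hgn'
    have hD : 0 < C + c * S := by positivity
    have hTD : T ≤ C + c * S := hTle n hn
    -- log (β n) ≤ log c + log (α n)
    have hlogle : Real.log (β n) ≤ Real.log c + Real.log (α n) := by
      have := Real.log_le_log (hβ n) (hscale n hn).2
      rwa [Real.log_mul hc.ne' (hα n).ne'] at this
    -- step 1 : log β / T ≤ log β / (C + c S)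
    have step1 : Real.log (β n) / T ≤ Real.log (β n) / (C + c * S) := by
      rw [div_le_div_iff₀ hTp hD]
      nlinarith [mul_le_mul_of_nonpos_left hTD hlogβ]
    -- step 2 : numerators
    have step2 : Real.log (β n) / (C + c * S) ≤ (Real.log c + M * S) / (C + c * S) := by
      apply (div_le_div_iff_of_pos_right hD).2
      linarith
    -- step 3 : final bound
    have step3 : (Real.log c + M * S) / (C + c * S) ≤ r := by
      rw [div_le_iff₀ hD]
      have h4 : S * (M - r * c) ≤ r * C - Real.log c := by
        have := (div_le_iff_of_neg (show M - r * c < 0 by nlinarith)).1 hSn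
        linarith [this]
      nlinarith [h4]
    have : Real.log (β n) / T ≤ r := le_trans step1 (le_trans step2 step3)
    exact_mod_cast EReal.coe_le_coe_iff.2 this
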